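/- arXiv:2010.11662 — 2 statements merged into one kernel-verified Lean document; each statement's English description precedes it below -/
import Mathlib

section
/- Let Z ⊆ ℝᴺ be a nonempty set with finitely many designated points Z* (extreme points), let F : Z → ℝ be bounded below on a subset K ⊆ Z, and let π : Z → ℝ be nonnegative on Z with π = 0 on K. Suppose for every α > 0 the problem min over Z of F + α·π has an optimal solution lying in Z*. Then there exists ᾱ > 0 such that for all α ≥ ᾱ, every global minimizer of F + α·π over Z that belongs to Z* satisfies π = 0 at that point, and hence is a global minimizer of F over K. -/
theorem exact_penalization_global (N : ℕ) (Z Zstar : Set (Fin N → ℝ))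
    (F pen : (Fin N → ℝ) → ℝ)
    (hZsub : Zstar ⊆ Z) (hZfin : Zstar.Finite)
    (hK : ∃ u ∈ Z, pen u = 0)
    (hpen : ∀ u ∈ Z, 0 ≤ pen u)
    (hbdd : ∃ c : ℝ, ∀ u ∈ Zstar, c ≤ F u)
    (hsol : ∀ α : ℝ, 0 < α → ∃ u ∈ Zstar, ∀ v ∈ Z, F u + α * pen u ≤ F v + α * pen v) :
    ∃ αbar : ℝ, 0 < αbar ∧ ∀ α : ℝ, αbar ≤ α → ∀ u ∈ Zstar,
      (∀ v ∈ Z, F u + α * pen u ≤ F v + α * pen v) →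
        pen u = 0 ∧ ∀ v ∈ Z, pen v = 0 → F u ≤ F v := by
  obtain ⟨u0, hu0Z, hu0pen⟩ := hK
  obtain ⟨c, hc⟩ := hbdd
  by_cases hpos : ∃ u ∈ Zstar, 0 < pen u
  · obtain ⟨w, hwZ, hwpos⟩ := hpos
    have hfin : (hZfin.toFinset.filter (fun u => 0 < pen u)).Nonempty :=
      ⟨w, by simp [hZfin.mem_toFinset, hwZ, hwpos]⟩
    set ε := (hZfin.toFinset.filter (fun u => 0 < pen u)).inf' hfin pen with hε
    have hεpos : 0 < ε := by
      rw [hε, Finset.lt_inf'_iff]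
      intro b hb
      exact (Finset.mem_filter.mp hb).2
    have hεle : ∀ u ∈ Zstar, 0 < pen u → ε ≤ pen u := by
      intro u hu hup
      exact Finset.inf'_le _ (by simp [hZfin.mem_toFinset, hu, hup])
    set M := max (F u0 - c) 0 with hM
    refine ⟨M / ε + 1, by positivity, ?_⟩
    intro α hα u huZ hmin
    have hαpos : (0:ℝ) < α := lt_of_lt_of_le (by positivity) hα
    have key : α * pen u ≤ M := by
      have h1 := hmin u0 hu0Z
      have h2 := hc u huZ
      rw [hu0pen] at h1
      have : F u + α * pen u ≤ F u0 := by linarith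
      calc α * pen u ≤ F u0 - c := by linarith
        _ ≤ M := le_max_left _ _
    have hpen0 : pen u = 0 := by
      by_contra h
      have hup : 0 < pen u := lt_of_le_of_ne (hpen u (hZsub huZ)) (Ne.symm h)
      have h1 : ε ≤ pen u := hεle u huZ hup
      have h2 : (M / ε + 1) * ε ≤ α * pen u :=
        mul_le_mul hα h1 hεpos.le hαpos.le
      have h3 : (M / ε + 1) * ε = M + ε := by field_simp
      linarith
    refine ⟨hpen0, fun v hvZ hv0 => ?_⟩
    have := hmin v hvZ
    rw [hpen0, hv0] at this
    linarith
  · push_neg at hpos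
    refine ⟨1, one_pos, ?_⟩
    intro α hα u huZ hmin
    have hpen0 : pen u = 0 :=
      le_antisymm (hpos u huZ) (hpen u (hZsub huZ))
    refine ⟨hpen0, fun v hvZ hv0 => ?_⟩
    have := hmin v hvZ
    rw [hpen0, hv0] at this
    linarith
end

section
/- Let (x̄,ȳ,z̄) be a local minimizer of (x,y,z) ↦ F(x,y) + α·π(y,z) over Z₁, where π(y,z) = Σᵢ min over (rᵢ,sᵢ)∈Tᵢ of (rᵢ zᵢ + sᵢ(b-Ay)ᵢ). Then for any (r̄,s̄) ∈ T achieving π(ȳ,z̄) (i.e., r̄ᵀz̄ + s̄ᵀ(b - Aȳ) = π(ȳ,z̄)), the point (x̄,ȳ,z̄,r̄,s̄) is a local minimizer of (x,y,z,r,s) ↦ F(x,y) + α(rᵀz + sᵀ(b-Ay)) over Z₁ × T. -/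
lemma pi_le_sum (l : ℕ) (c z : Fin l → ℝ) (r s : Fin l → ℝ)
    (hT : ∀ i, 0 ≤ r i ∧ 0 ≤ s i ∧ r i + s i = 1) :
    (∑ i, sInf {v : ℝ | ∃ r' s' : ℝ, 0 ≤ r' ∧ 0 ≤ s' ∧ r' + s' = 1 ∧
      v = r' * z i + s' * (c i)}) ≤ ∑ i, (r i * z i + s i * c i) := by
  apply Finset.sum_le_sum
  intro i _
  apply csInf_le
  · refine ⟨min (z i) (c i), ?_⟩
    rintro v ⟨r', s', hr, hs, hrs, rfl⟩
    calc min (z i) (c i) = r' * min (z i) (c i) + s' * min (z i) (c i) := by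
          rw [← add_mul, hrs, one_mul]
      _ ≤ r' * z i + s' * c i := by
          gcongr
          · exact min_le_left _ _
          · exact min_le_right _ _
  · exact ⟨r i, s i, (hT i).1, (hT i).2.1, (hT i).2.2, rfl⟩

theorem local_min_Palpha_to_Qalpha
    (n l : ℕ) (F : (Fin n → ℝ) → (Fin n → ℝ) → ℝ)
    (A : Matrix (Fin l) (Fin n) ℝ) (b : Fin l → ℝ) (α : ℝ) (hα : 0 < α)
    (Z1 : Set ((Fin n → ℝ) × (Fin n → ℝ) × (Fin l → ℝ)))
    (π : (Fin n → ℝ) → (Fin l → ℝ) → ℝ)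
    (hπ : ∀ y z, π y z = ∑ i, sInf {v : ℝ | ∃ r s : ℝ, 0 ≤ r ∧ 0 ≤ s ∧ r + s = 1 ∧
      v = r * z i + s * (b i - A.mulVec y i)})
    (xb yb : Fin n → ℝ) (zb : Fin l → ℝ) (hmem : (xb, yb, zb) ∈ Z1)
    (hloc : ∃ ε > 0, ∀ p ∈ Z1, dist p (xb, yb, zb) < ε →
      F xb yb + α * π yb zb ≤ F p.1 p.2.1 + α * π p.2.1 p.2.2)
    (rb sb : Fin l → ℝ) (hT : ∀ i, 0 ≤ rb i ∧ 0 ≤ sb i ∧ rb i + sb i = 1)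
    (hach : (∑ i, (rb i * zb i + sb i * (b i - A.mulVec yb i))) = π yb zb) :
    ∃ ε > 0, ∀ p ∈ Z1, ∀ rs : (Fin l → ℝ) × (Fin l → ℝ),
      (∀ i, 0 ≤ rs.1 i ∧ 0 ≤ rs.2 i ∧ rs.1 i + rs.2 i = 1) →
      dist (p, rs) ((xb, yb, zb), (rb, sb)) < ε →
        F xb yb + α * ∑ i, (rb i * zb i + sb i * (b i - A.mulVec yb i)) ≤
          F p.1 p.2.1 + α * ∑ i, (rs.1 i * p.2.2 i + rs.2 i * (b i - A.mulVec p.2.1 i)) := by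
  obtain ⟨ε, hε, h⟩ := hloc
  refine ⟨ε, hε, fun p hp rs hrs hd => ?_⟩
  have hdp : dist p (xb, yb, zb) < ε :=
    lt_of_le_of_lt (le_max_left _ _) hd
  calc F xb yb + α * ∑ i, (rb i * zb i + sb i * (b i - A.mulVec yb i))
      = F xb yb + α * π yb zb := by rw [hach]
    _ ≤ F p.1 p.2.1 + α * π p.2.1 p.2.2 := h p hp hdp
    _ ≤ F p.1 p.2.1 + α * ∑ i, (rs.1 i * p.2.2 i + rs.2 i * (b i - A.mulVec p.2.1 i)) := by
        gcongr
        rw [hπ]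
        exact pi_le_sum l _ _ rs.1 rs.2 hrs
end
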